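/- For relatively prime integers 1 < p < q, the partial word W_{p,q} = (S[0..p−3]◊◊)^k · S · (◊◊S[q..q+p−3])^k, where k = ⌊q/p⌋ and S = S_{p,q} is a word of length p+q−2 with periods p and q but not period 1, has both strong periods p and q. -/

import Mathlib

/-- A symbol of a partial word (`none` is a hole `◊`) is compatible with a solid letter. -/
def PWCompatible {α : Type*} (x : Option α) (a : α) : Prop :=
  x = none ∨ x = some a

/-- `p` is a strong period of the partial word `X` (a list over `Option α`):
there is a solid word `P` of length `p` with `X[i] ≈ P[i mod p]` for all `i`. -/
def IsStrongPeriod {α : Type*} (X : List (Option α)) (p : ℕ) : Prop :=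
  0 < p ∧ ∃ P : ℕ → α, ∀ (i : ℕ) (h : i < X.length), PWCompatible (X.get ⟨i, h⟩) (P (i % p))

/-- `p` is a period of a solid word `S`. -/
def IsPeriod {α : Type*} (S : List α) (p : ℕ) : Prop :=
  ∀ (i : ℕ) (h1 : i < S.length) (h2 : i + p < S.length), S.get ⟨i, h1⟩ = S.get ⟨i + p, h2⟩

/-- The partial word `W_{p,q} = (S[0..p-3]◊◊)^k ⬝ S ⬝ (◊◊S[q..q+p-3])^k` where `k = ⌊q/p⌋`. -/
def Wword {α : Type*} (S : List α) (p q : ℕ) : List (Option α) :=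
  (List.replicate (q / p) ((S.take (p - 2)).map some ++ [none, none])).flatten ++
    S.map some ++
    (List.replicate (q / p) ([(none : Option α), none] ++ (S.drop q).map some)).flatten

lemma flatten_replicate_length {α : Type*} (k : ℕ) (L : List α) :
    ((List.replicate k L).flatten).length = k * L.length := by
  induction k with
  | zero => simp
  | succ n ih => simp [List.replicate_succ, ih, Nat.succ_mul, Nat.add_comm]

lemma getD_flatten_replicate {α : Type*} (k : ℕ) (L : List α) (dd : α) (i : ℕ)
    (h : i < k * L.length) :
    ((List.replicate k L).flatten).getD i dd = L.getD (i % L.length) dd := by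
  induction k generalizing i with
  | zero => simp at h
  | succ n ih =>
    rw [List.replicate_succ, List.flatten_cons]
    by_cases hi : i < L.length
    · rw [List.getD_append _ _ _ _ hi, Nat.mod_eq_of_lt hi]
    · rw [List.getD_append_right _ _ _ _ (le_of_not_gt hi),
        ih (i - L.length) (by rw [Nat.succ_mul] at h; omega)]
      congr 1
      conv_rhs => rw [Nat.mod_eq_sub_mod (le_of_not_gt hi)]


/-- For relatively prime `1 < p < q` and a word `S = S_{p,q}` of length `p+q-2` with
periods `p` and `q` but not period `1`, the partial word `W_{p,q}` has
both strong periods `p` and `q`. -/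
theorem Wword_strongPeriods {α : Type*} (p q : ℕ) (S : List α)
    (hp : 1 < p) (hpq : p < q) (hcop : Nat.Coprime p q)
    (hlen : S.length = p + q - 2)
    (hSp : IsPeriod S p) (hSq : IsPeriod S q) (hS1 : ¬ IsPeriod S 1) :
    IsStrongPeriod (Wword S p q) p ∧ IsStrongPeriod (Wword S p q) q := by
  clear hS1
  obtain ⟨k, hk⟩ : ∃ k, k = q / p := ⟨_, rfl⟩
  obtain ⟨r, hr⟩ : ∃ r, r = q % p := ⟨_, rfl⟩
  have hrp : r < p := by rw [hr]; exact Nat.mod_lt _ (by omega)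
  have hr0 : 0 < r := by
    rcases Nat.eq_zero_or_pos r with h0 | h0
    · exfalso
      have hdvd : p ∣ q := Nat.dvd_of_mod_eq_zero (by omega)
      have h1 : p ∣ Nat.gcd p q := Nat.dvd_gcd dvd_rfl hdvd
      have h2 : Nat.gcd p q = 1 := hcop
      rw [h2] at h1
      have := Nat.le_of_dvd one_pos h1
      omega
    · exact h0
  have hkq : k * p + r = q := by
    rw [hk, hr, Nat.mul_comm]; exact Nat.div_add_mod q p
  have hS0 : 0 < S.length := by omega
  obtain ⟨d, -⟩ := List.exists_mem_of_ne_nil S (List.ne_nil_of_length_pos hS0)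
  -- basic getD lemmas for S
  have gdm : ∀ i, i < S.length → S.getD i d = S.getD (i % p) d := by
    intro i
    induction i using Nat.strong_induction_on with
    | _ i ih =>
      intro hi
      by_cases h : i < p
      · rw [Nat.mod_eq_of_lt h]
      · have h1 : i - p < S.length := by omega
        have h2 : i - p + p < S.length := by omega
        have h3 := hSp (i - p) h1 h2
        have h4 : S.getD (i - p) d = S.getD i d := by
          rw [List.getD_eq_getElem _ _ h1, List.getD_eq_getElem _ _ hi]
          have e : i - p + p = i := by omega
          simp only [List.get_eq_getElem, e] at h3
          exact h3
        rw [← h4, ih (i - p) (by omega) h1, Nat.mod_eq_sub_mod (by omega : i ≥ p)]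
  have gcm : ∀ a b, a < S.length → b < S.length → a % p = b % p →
      S.getD a d = S.getD b d := by
    intro a b ha hb hab
    rw [gdm a ha, hab, ← gdm b hb]
  have gq : ∀ a, a + q < S.length → S.getD a d = S.getD (a + q) d := by
    intro a h
    have h1 : a < S.length := by omega
    have h3 := hSq a h1 h
    rw [List.getD_eq_getElem _ _ h1, List.getD_eq_getElem _ _ h]
    simpa only [List.get_eq_getElem] using h3
  have key : ∀ a b, a < S.length → b < S.length → b % p = (a + q) % p →
      a % p < p - 2 → S.getD a d = S.getD b d := by
    intro a b ha hb hmod hlt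
    have hap : a % p < S.length := by
      have := Nat.mod_lt a (show 0 < p by omega); omega
    have h1 : S.getD a d = S.getD (a % p) d := gdm a ha
    have h2 : S.getD (a % p) d = S.getD (a % p + q) d := gq _ (by omega)
    have h3 : S.getD (a % p + q) d = S.getD b d := by
      refine gcm _ _ (by omega) hb ?_
      rw [hmod]
      exact Nat.ModEq.add_right q (Nat.mod_mod_of_dvd a (dvd_refl p))
    rw [h1, h2, h3]
  have gmq : ∀ x, x < S.length → S.getD (x % q) d = S.getD x d := by
    intro x hx
    by_cases h : x < q
    · rw [Nat.mod_eq_of_lt h]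
    · have h2 : x % q = x - q := by
        rw [Nat.mod_eq_sub_mod (by omega)]
        exact Nat.mod_eq_of_lt (by omega)
      rw [h2, gq (x - q) (by omega)]
      congr 1
      omega
  -- description of Wword
  obtain ⟨A, hA⟩ : ∃ A' : List (Option α),
      A' = (S.take (p - 2)).map some ++ [none, none] := ⟨_, rfl⟩
  obtain ⟨B, hB⟩ : ∃ B' : List (Option α),
      B' = [(none : Option α), none] ++ (S.drop q).map some := ⟨_, rfl⟩
  have hAlen : A.length = p := by
    rw [hA]; simp [hlen]; omega
  have hBlen : B.length = p := by
    rw [hB]; simp [hlen]; omega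
  have hWeq : Wword S p q =
      (List.replicate k A).flatten ++ S.map some ++ (List.replicate k B).flatten := by
    rw [Wword, ← hk, ← hA, ← hB]
  have hWlen : (Wword S p q).length = k * p + S.length + k * p := by
    rw [hWeq]
    simp only [List.length_append, flatten_replicate_length, hAlen, hBlen,
      List.length_map]
  have hW1 : ∀ i, i < k * p → (Wword S p q).getD i none = A.getD (i % p) none := by
    intro i hi
    rw [hWeq, List.append_assoc,
      List.getD_append _ _ _ _ (by rw [flatten_replicate_length, hAlen]; exact hi),
      getD_flatten_replicate _ _ _ _ (by rw [hAlen]; exact hi), hAlen]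
  have hW2 : ∀ t, t < S.length →
      (Wword S p q).getD (k * p + t) none = some (S.getD t d) := by
    intro t ht
    rw [hWeq, List.append_assoc,
      List.getD_append_right _ _ _ _
        (by rw [flatten_replicate_length, hAlen]; omega)]
    rw [flatten_replicate_length, hAlen]
    have e : k * p + t - k * p = t := by omega
    rw [e, List.getD_append _ _ _ _ (by rw [List.length_map]; exact ht),
      List.getD_eq_getElem _ _ (by rw [List.length_map]; exact ht)]
    rw [List.getElem_map, List.getD_eq_getElem S d ht]
  have hW3 : ∀ u, u < k * p →
      (Wword S p q).getD (k * p + S.length + u) none = B.getD (u % p) none := by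
    intro u hu
    rw [hWeq,
      List.getD_append_right _ _ _ _
        (by simp only [List.length_append, flatten_replicate_length, hAlen,
              List.length_map]; omega)]
    have e : k * p + S.length + u -
        ((List.replicate k A).flatten ++ S.map some).length = u := by
      simp only [List.length_append, flatten_replicate_length, hAlen, List.length_map]
      omega
    rw [e, getD_flatten_replicate _ _ _ _ (by rw [hBlen]; exact hu), hBlen]
  have hAget : ∀ j, j < p →
      A.getD j none = if j < p - 2 then some (S.getD j d) else none := by
    intro j hj
    by_cases hj2 : j < p - 2
    · rw [if_pos hj2, hA]
      have hjt : j < ((S.take (p - 2)).map some).length := by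
        simp [hlen]; omega
      rw [List.getD_append _ _ _ _ hjt, List.getD_eq_getElem _ _ hjt]
      simp only [List.getElem_map, List.getElem_take]
      rw [List.getD_eq_getElem S d (by omega)]
    · rw [if_neg hj2, hA]
      have hle : ((S.take (p - 2)).map some).length ≤ j := by
        simp [hlen]; omega
      rw [List.getD_append_right _ _ _ _ hle]
      have : ∀ m, ([none, none] : List (Option α)).getD m none = none := by
        intro m; rcases m with _ | _ | m <;> rfl
      exact this _
  have hBget : ∀ j, j < p →
      B.getD j none = if j < 2 then none else some (S.getD (q + (j - 2)) d) := by
    intro j hj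
    by_cases hj2 : j < 2
    · rw [if_pos hj2, hB]
      rw [List.getD_append _ _ _ _ (by simpa using hj2)]
      rcases j with _ | _ | m <;> first | rfl | omega
    · rw [if_neg hj2, hB]
      rw [List.getD_append_right _ _ _ _ (by simp only [List.length_cons, List.length_nil]; omega)]
      have hjd : j - 2 < ((S.drop q).map some).length := by
        simp [hlen]; omega
      rw [List.getD_eq_getElem _ _ (by simpa using hjd)]
      simp only [List.getElem_map, List.getElem_drop]
      rw [List.getD_eq_getElem S d (by omega)]
      rfl
  -- the key shift fact at the last block
  constructor
  · -- strong period p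
    refine ⟨by omega, fun j => S.getD (j % p) d, ?_⟩
    intro i hh
    have hg : (Wword S p q).get ⟨i, hh⟩ = (Wword S p q).getD i none := by
      rw [List.get_eq_getElem, List.getD_eq_getElem _ _ hh]
    rw [hg]
    beta_reduce
    have hiW : i < k * p + S.length + k * p := by rw [hWlen] at hh; exact hh
    rcases lt_or_ge i (k * p) with h1 | h1
    · rw [hW1 i h1, hAget (i % p) (Nat.mod_lt _ (by omega))]
      by_cases h2 : i % p < p - 2
      · rw [if_pos h2]
        refine Or.inr (congrArg some ?_)
        rw [Nat.mod_mod_of_dvd i (dvd_refl p)]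
      · rw [if_neg h2]; exact Or.inl rfl
    · rcases lt_or_ge i (k * p + S.length) with h2 | h2
      · obtain ⟨t, rfl⟩ : ∃ t, i = k * p + t := ⟨i - k * p, by omega⟩
        have ht : t < S.length := by omega
        rw [hW2 t ht]
        refine Or.inr (congrArg some ?_)
        rw [Nat.mod_mod_of_dvd _ (dvd_refl p), Nat.mul_add_mod']
        exact gdm t ht
      · obtain ⟨u, rfl⟩ : ∃ u, i = k * p + S.length + u :=
          ⟨i - (k * p + S.length), by omega⟩
        have hu : u < k * p := by omega
        have hjp : u % p < p := Nat.mod_lt _ (by omega)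
        rw [hW3 u hu, hBget (u % p) hjp]
        by_cases h3 : u % p < 2
        · rw [if_pos h3]; exact Or.inl rfl
        · rw [if_neg h3]
          refine Or.inr (congrArg some ?_)
          have hv : (p - 2 + u) % p = (u % p - 2) % p := by
            have e1 : (p - 2 + u) % p = (p - 2 + u % p) % p :=
              Nat.ModEq.add_left (p - 2) (Nat.mod_mod_of_dvd u (dvd_refl p)).symm
            have e2 : p - 2 + u % p = p + (u % p - 2) := by omega
            rw [e1, e2, Nat.add_mod_left]
          rw [Nat.mod_mod_of_dvd _ (dvd_refl p)]
          have e1 : k * p + S.length + u = k * p + (q + (p - 2 + u)) := by omega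
          rw [e1, Nat.mul_add_mod']
          refine gcm _ _ (by omega)
            (by have := Nat.mod_lt (q + (p - 2 + u)) (show 0 < p by omega); omega) ?_
          rw [Nat.mod_mod_of_dvd _ (dvd_refl p)]
          exact Nat.ModEq.add_left q hv.symm
  · -- strong period q
    refine ⟨by omega, fun j => S.getD ((j + r) % q) d, ?_⟩
    intro i hh
    have hQi : ∀ m : ℕ, (m % q + r) % q = (m + r) % q := fun m =>
      Nat.ModEq.add_right r (Nat.mod_mod_of_dvd m (dvd_refl q))
    have hg : (Wword S p q).get ⟨i, hh⟩ = (Wword S p q).getD i none := by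
      rw [List.get_eq_getElem, List.getD_eq_getElem _ _ hh]
    rw [hg]
    beta_reduce
    have hiW : i < k * p + S.length + k * p := by rw [hWlen] at hh; exact hh
    rcases lt_or_ge i (k * p) with h1 | h1
    · rw [hW1 i h1, hAget (i % p) (Nat.mod_lt _ (by omega))]
      by_cases h2 : i % p < p - 2
      · rw [if_pos h2]
        refine Or.inr (congrArg some ?_)
        rw [hQi, Nat.mod_eq_of_lt (show i + r < q by omega)]
        have hmod : (i + r) % p = (i + q) % p :=
          Nat.ModEq.add_left i (show r % p = q % p by rw [Nat.mod_eq_of_lt hrp]; exact hr)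
        have h4 := key i (i + r) (by omega) (by omega) hmod h2
        rw [← h4]
        exact (gdm i (by omega)).symm
      · rw [if_neg h2]; exact Or.inl rfl
    · rcases lt_or_ge i (k * p + S.length) with h2 | h2
      · obtain ⟨t, rfl⟩ : ∃ t, i = k * p + t := ⟨i - k * p, by omega⟩
        have ht : t < S.length := by omega
        rw [hW2 t ht]
        refine Or.inr (congrArg some ?_)
        rw [hQi]
        have e : k * p + t + r = q + t := by omega
        rw [e, Nat.add_mod_left]
        exact (gmq t ht).symm
      · obtain ⟨u, rfl⟩ : ∃ u, i = k * p + S.length + u :=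
          ⟨i - (k * p + S.length), by omega⟩
        have hu : u < k * p := by omega
        have hjp : u % p < p := Nat.mod_lt _ (by omega)
        rw [hW3 u hu, hBget (u % p) hjp]
        by_cases h3 : u % p < 2
        · rw [if_pos h3]; exact Or.inl rfl
        · rw [if_neg h3]
          refine Or.inr (congrArg some ?_)
          have hv : (p - 2 + u) % p = u % p - 2 := by
            have e1 : (p - 2 + u) % p = (p - 2 + u % p) % p :=
              Nat.ModEq.add_left (p - 2) (Nat.mod_mod_of_dvd u (dvd_refl p)).symm
            have e2 : p - 2 + u % p = p + (u % p - 2) := by omega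
            rw [e1, e2, Nat.add_mod_left]
            exact Nat.mod_eq_of_lt (by omega)
          rw [hQi]
          have e : k * p + S.length + u + r = (p - 2 + u) + q * 2 := by omega
          rw [e, Nat.add_mul_mod_self_left, gmq (p - 2 + u) (by omega)]
          have hmod : (q + (u % p - 2)) % p = (p - 2 + u + q) % p := by
            rw [Nat.add_comm (p - 2 + u) q]
            refine Nat.ModEq.add_left q ?_
            show (u % p - 2) % p = (p - 2 + u) % p
            rw [hv]
            exact Nat.mod_eq_of_lt (by omega)
          exact (key (p - 2 + u) (q + (u % p - 2)) (by omega) (by omega) hmod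
            (by rw [hv]; omega)).symm
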